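/- Suppose the correction χ ∈ Ξ (a Hilbert space) satisfies the KKT system (∇⊥χ, ∇⊥ξ) - (div ξ, ν) = 0 for all ξ ∈ Ξ and the constraint (div χ, ρ) = (as σ_h^R, ρJ) for all ρ ∈ Z, for some multiplier ν ∈ Z, and suppose the stability bound ‖ν‖ ≤ (C²/√2)‖as σ_h^R‖ holds. Then ‖∇⊥χ‖ ≤ C‖as σ_h^R‖, and if moreover σ is a symmetric matrix field (as σ = 0) with the pointwise bound |as(σ - σ_h^R)| ≤ |σ - σ_h^R|, then ‖∇⊥χ‖ ≤ C‖σ - σ_h^R‖. -/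
import Mathlib


open RealInnerProductSpace

/-- bound on the symmetrizing correction (Proposition 5.1). Here `curl χ`
    stands for ∇⊥χ, `dv` for the divergence, `Jmap ρ` for ρJ (so ‖Jmap ρ‖ = √2 ‖ρ‖),
    and `as` for the anti-symmetric part operator on the stress space H. If χ solves the
    KKT system with multiplier ν satisfying the stability bound
    ‖ν‖ ≤ (C²/√2)‖as σ_h^R‖, then ‖∇⊥χ‖ ≤ C‖as σ_h^R‖; moreover if σ is symmetric
    (as σ = 0) and the pointwise bound gives ‖as(σ - σ_h^R)‖ ≤ ‖σ - σ_h^R‖, then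
    ‖∇⊥χ‖ ≤ C‖σ - σ_h^R‖. -/
theorem correction_bound
    {Ξ Z H : Type*}
    [NormedAddCommGroup Ξ] [InnerProductSpace ℝ Ξ]
    [NormedAddCommGroup Z] [InnerProductSpace ℝ Z]
    [NormedAddCommGroup H] [InnerProductSpace ℝ H]
    (curl : Ξ →ₗ[ℝ] H) (dv : Ξ →ₗ[ℝ] Z) (Jmap : Z →ₗ[ℝ] H)
    (hJ : ∀ ρ : Z, ‖Jmap ρ‖ = Real.sqrt 2 * ‖ρ‖)
    (as : H →ₗ[ℝ] H) (σ σR : H) (χ : Ξ) (ν : Z) (C : ℝ) (hC : 0 ≤ C)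
    (hKKT : ∀ ξ : Ξ, ⟪curl χ, curl ξ⟫ - ⟪dv ξ, ν⟫ = 0)
    (hconstraint : ∀ ρ : Z, ⟪dv χ, ρ⟫ = ⟪as σR, Jmap ρ⟫)
    (hstab : ‖ν‖ ≤ (C ^ 2 / Real.sqrt 2) * ‖as σR‖) :
    ‖curl χ‖ ≤ C * ‖as σR‖ ∧
    (as σ = 0 → ‖as (σ - σR)‖ ≤ ‖σ - σR‖ → ‖curl χ‖ ≤ C * ‖σ - σR‖) := by
  have hs2 : (0:ℝ) < Real.sqrt 2 := Real.sqrt_pos.mpr (by norm_num)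
  have key : ‖curl χ‖ ^ 2 ≤ (C * ‖as σR‖) ^ 2 := by
    have h1 : ⟪curl χ, curl χ⟫ = ⟪dv χ, ν⟫ := by
      have := hKKT χ; linarith
    have h2 : ⟪curl χ, curl χ⟫ = ⟪as σR, Jmap ν⟫ := by
      rw [h1, hconstraint ν]
    have h3 : ⟪as σR, Jmap ν⟫ ≤ ‖as σR‖ * (Real.sqrt 2 * ‖ν‖) := by
      calc ⟪as σR, Jmap ν⟫ ≤ ‖as σR‖ * ‖Jmap ν‖ := real_inner_le_norm _ _
        _ = ‖as σR‖ * (Real.sqrt 2 * ‖ν‖) := by rw [hJ]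
    have h4 : Real.sqrt 2 * ‖ν‖ ≤ C ^ 2 * ‖as σR‖ := by
      have := mul_le_mul_of_nonneg_left hstab (le_of_lt hs2)
      calc Real.sqrt 2 * ‖ν‖ ≤ Real.sqrt 2 * (C ^ 2 / Real.sqrt 2 * ‖as σR‖) := this
        _ = C ^ 2 * ‖as σR‖ := by field_simp
    have h5 : ⟪curl χ, curl χ⟫ = ‖curl χ‖ ^ 2 := real_inner_self_eq_norm_sq _
    nlinarith [norm_nonneg (as σR), norm_nonneg (curl χ)]
  have hA : ‖curl χ‖ ≤ C * ‖as σR‖ := by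
    have h := Real.sqrt_le_sqrt key
    rwa [Real.sqrt_sq (norm_nonneg _), Real.sqrt_sq (mul_nonneg hC (norm_nonneg _))] at h
  refine ⟨hA, fun hsym hpt => ?_⟩
  have : as σR = - as (σ - σR) := by
    rw [map_sub, hsym]; abel
  have hnorm : ‖as σR‖ = ‖as (σ - σR)‖ := by rw [this, norm_neg]
  calc ‖curl χ‖ ≤ C * ‖as σR‖ := hA
    _ = C * ‖as (σ - σR)‖ := by rw [hnorm]
    _ ≤ C * ‖σ - σR‖ := mul_le_mul_of_nonneg_left hpt hC
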